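/- For every n ≥ 0 and every 0 ≤ k ≤ n, the coefficient of q^k in the formal power series F_n(q)/F_{n+1}(q) equals (-1)^k times the k-th Catalan number C_k. -/

import Mathlib

open PowerSeries

noncomputable def qFibS : ℕ → PowerSeries ℚ
  | 0 => 1
  | 1 => 1
  | n + 2 => qFibS (n + 1) + PowerSeries.X * qFibS n

lemma qFibS_const : ∀ n, PowerSeries.constantCoeff (R := ℚ) (qFibS n) = 1
  | 0 => by simp [qFibS]
  | 1 => by simp [qFibS]
  | n + 2 => by simp [qFibS, qFibS_const (n + 1)]

lemma qFibS_ne (n : ℕ) : PowerSeries.constantCoeff (R := ℚ) (qFibS n) ≠ 0 := by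
  rw [qFibS_const]; norm_num

lemma qFibS_key (n : ℕ) :
    qFibS (n + 1) * (qFibS (n + 2))⁻¹ *
      (1 + PowerSeries.X * (qFibS n * (qFibS (n + 1))⁻¹)) = 1 := by
  have hA := PowerSeries.mul_inv_cancel (qFibS (n + 1)) (qFibS_ne (n + 1))
  have hB := PowerSeries.mul_inv_cancel (qFibS (n + 2)) (qFibS_ne (n + 2))
  have h2 : qFibS (n + 2) = qFibS (n + 1) + PowerSeries.X * qFibS n := rfl
  calc qFibS (n + 1) * (qFibS (n + 2))⁻¹ *
      (1 + PowerSeries.X * (qFibS n * (qFibS (n + 1))⁻¹))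
      = (qFibS (n + 1) + PowerSeries.X * qFibS n *
          (qFibS (n + 1) * (qFibS (n + 1))⁻¹)) * (qFibS (n + 2))⁻¹ := by ring
    _ = qFibS (n + 2) * (qFibS (n + 2))⁻¹ := by rw [hA, mul_one, ← h2]
    _ = 1 := hB

theorem qFib_ratio_catalan (n k : ℕ) (hk : k ≤ n) :
    PowerSeries.coeff (R := ℚ) k (qFibS n * (qFibS (n + 1))⁻¹) = (-1) ^ k * catalan k := by
  induction k using Nat.strong_induction_on generalizing n with
  | _ k ih =>
    match k, n, hk with
    | 0, n, _ => simp [PowerSeries.coeff_zero_eq_constantCoeff, qFibS_const,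
        PowerSeries.constantCoeff_inv]
    | m + 1, n' + 1, hk =>
      have hm : m ≤ n' := Nat.succ_le_succ_iff.mp hk
      have hkey := congrArg (PowerSeries.coeff (R := ℚ) (m + 1)) (qFibS_key n')
      rw [mul_add, mul_one, map_add] at hkey
      have hX : qFibS (n' + 1) * (qFibS (n' + 2))⁻¹ *
          (PowerSeries.X * (qFibS n' * (qFibS (n' + 1))⁻¹)) =
          PowerSeries.X * (qFibS (n' + 1) * (qFibS (n' + 2))⁻¹ *
          (qFibS n' * (qFibS (n' + 1))⁻¹)) := by ring
      rw [hX, PowerSeries.coeff_succ_X_mul] at hkey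
      have hsum : PowerSeries.coeff (R := ℚ) m (qFibS (n' + 1) * (qFibS (n' + 2))⁻¹ *
          (qFibS n' * (qFibS (n' + 1))⁻¹)) =
          (-1) ^ m * catalan (m + 1) := by
        rw [PowerSeries.coeff_mul, catalan_succ']
        push_cast
        rw [Finset.mul_sum]
        refine Finset.sum_congr rfl ?_
        rintro ⟨i, j⟩ hij
        have hij' : i + j = m := Finset.HasAntidiagonal.mem_antidiagonal.mp hij
        have h1 : i ≤ n' + 1 := by omega
        have h2 : j ≤ n' := by omega
        rw [ih i (by omega) _ h1, ih j (by omega) _ h2]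
        rw [← hij', pow_add]
        ring
      rw [hsum] at hkey
      have h1c : PowerSeries.coeff (R := ℚ) (m + 1) (1 : PowerSeries ℚ) = 0 := by
        simp
      rw [h1c] at hkey
      have : PowerSeries.coeff (R := ℚ) (m + 1)
          (qFibS (n' + 1) * (qFibS (n' + 2))⁻¹) = -((-1) ^ m * catalan (m + 1)) := by
        linarith
      rw [this]
      ring
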